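/- Let W be the Coxeter group of type D_4 with generators s_1, s_2, s_3, s_4 where s_2 is the central vertex, acting on its canonical root system Φ (which has 12 positive roots), and let G be the group of symmetries generated by the 3-cycle g with g(s_1)=s_3, g(s_3)=s_4, g(s_4)=s_1, g(s_2)=s_2. Then Φ = W^G·α_1 ∪ W^G·α_2 ∪ W^G·α_3 ∪ W^G·α_4. -/

import Mathlib

open Real

/-- A Coxeter matrix on the set `S`, with `0` representing the label `∞`. -/
structure CoxeterMat (S : Type*) where
  m : S → S → ℕ
  diagonal : ∀ s, m s s = 1
  symmetric : ∀ s t, m s t = m t s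
  off_diagonal : ∀ s t, s ≠ t → m s t ≠ 1

namespace CoxeterMat

variable {S : Type*} (M : CoxeterMat S)

/-- The coefficient `⟨α_s, α_t⟩ = -2 cos (π / m_{s,t})`, with value `-2` when `m_{s,t} = ∞`. -/
noncomputable def c (s t : S) : ℝ :=
  if M.m s t = 0 then -2 else -2 * Real.cos (Real.pi / (M.m s t : ℝ))

/-- The simple root `α_s` in `V = ⊕_{s ∈ S} ℝ α_s`. -/
noncomputable def sroot (s : S) : S →₀ ℝ := Finsupp.single s 1

/-- The canonical bilinear form of the Coxeter graph. -/
noncomputable def bform : (S →₀ ℝ) →ₗ[ℝ] (S →₀ ℝ) →ₗ[ℝ] ℝ :=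
  Finsupp.lift _ ℝ S fun s => Finsupp.lift ℝ ℝ S fun t => M.c s t

/-- The simple reflection `σ_s : x ↦ x - ⟨α_s, x⟩ α_s`. -/
noncomputable def sigma (s : S) : (S →₀ ℝ) →ₗ[ℝ] (S →₀ ℝ) :=
  LinearMap.id - (M.bform (sroot s)).smulRight (sroot s)

/-- The Coxeter group `W`, realized as the subgroup of linear automorphisms of `V`
generated by the simple reflections. -/
noncomputable def Wgrp : Subgroup ((S →₀ ℝ) ≃ₗ[ℝ] (S →₀ ℝ)) :=
  Subgroup.closure {w | ∃ s : S, (w : (S →₀ ℝ) →ₗ[ℝ] (S →₀ ℝ)) = M.sigma s}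

/-- The canonical root system `Φ = {w(α_s) | w ∈ W, s ∈ S}`. -/
def Phi : Set (S →₀ ℝ) := {b | ∃ w ∈ M.Wgrp, ∃ s : S, b = w (sroot s)}

/-- The set of positive roots. -/
def PhiPos : Set (S →₀ ℝ) := {b | b ∈ M.Phi ∧ ∀ s, 0 ≤ b s}

/-- The equivalence relation `≡` on `Φ` generated by `α ≡₁ β ⟺ ⟨α, β⟩ ∉ {0, 1, -1}`. -/
def equivR : (S →₀ ℝ) → (S →₀ ℝ) → Prop :=
  Relation.EqvGen (fun a b => a ∈ M.Phi ∧ b ∈ M.Phi ∧ M.bform a b ∉ ({0, 1, -1} : Set ℝ))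

/-- The underlying graph of the Coxeter graph: `s` and `t` are joined iff `m_{s,t} ≥ 3`
(including `m_{s,t} = ∞`). -/
def graph : SimpleGraph S where
  Adj s t := s ≠ t ∧ M.m s t ≠ 2
  symm := ⟨fun s t h => ⟨h.1.symm, by rw [M.symmetric]; exact h.2⟩⟩
  loopless := ⟨fun s h => h.1 rfl⟩

/-- The action of a permutation of `S` on `V`. -/
noncomputable def permV (g : Equiv.Perm S) : (S →₀ ℝ) ≃ₗ[ℝ] (S →₀ ℝ) :=
  Finsupp.domLCongr g

/-- The set of elements of `W` fixed by the group `G` of symmetries (acting by conjugation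
by the corresponding permutations of coordinates). -/
noncomputable def WfixG (G : Subgroup (Equiv.Perm S)) :
    Set ((S →₀ ℝ) ≃ₗ[ℝ] (S →₀ ℝ)) :=
  {w | w ∈ M.Wgrp ∧ ∀ g ∈ G, permV g * w = w * permV g}

/-- Construct a simply laced Coxeter matrix from an adjacency relation. -/
noncomputable def ofAdj (A : S → S → Prop) (hs : ∀ s t, A s t → A t s)
    (hi : ∀ s, ¬ A s s) : CoxeterMat S where
  m s t := open Classical in if s = t then 1 else if A s t then 3 else 2
  diagonal s := by simp
  symmetric s t := by
    classical
    by_cases h : s = t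
    · subst h; rfl
    · have h' : t ≠ s := Ne.symm h
      simp only [if_neg h, if_neg h']
      by_cases hA : A s t
      · rw [if_pos hA, if_pos (hs s t hA)]
      · rw [if_neg hA, if_neg (fun h2 => hA (hs t s h2))]
  off_diagonal s t h := by
    classical
    simp only [if_neg h]
    split <;> norm_num

/-- Isomorphism of Coxeter graphs. -/
def Iso {T : Type*} (M : CoxeterMat S) (N : CoxeterMat T) : Prop :=
  ∃ e : S ≃ T, ∀ s t, N.m (e s) (e t) = M.m s t

/-- The full Coxeter subgraph spanned by `Y ⊆ S`. -/
def restrict (Y : Set S) : CoxeterMat Y where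
  m s t := M.m s t
  diagonal s := M.diagonal s
  symmetric s t := M.symmetric s t
  off_diagonal s t h := M.off_diagonal s t (fun hh => h (Subtype.ext hh))

end CoxeterMat

open CoxeterMat

/-- The Coxeter graph `A_n`: a path with `n` vertices. -/
noncomputable def pathA (n : ℕ) : CoxeterMat (Fin n) :=
  ofAdj (fun i j => i.val + 1 = j.val ∨ j.val + 1 = i.val)
    (fun _ _ h => h.symm)
    (fun s h => by rcases h with h | h <;> omega)

/-- The Coxeter graph `D_n`: a path `0 — 1 — ⋯ — (n-2)` together with an extra vertex `n-1`
joined to `n-3`. -/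
noncomputable def Dmat (n : ℕ) : CoxeterMat (Fin n) :=
  ofAdj (fun i j => i ≠ j ∧
      (((i.val + 1 = j.val ∧ j.val ≤ n - 2) ∨ (i.val + 2 = j.val ∧ j.val = n - 1)) ∨
       ((j.val + 1 = i.val ∧ i.val ≤ n - 2) ∨ (j.val + 2 = i.val ∧ i.val = n - 1))))
    (fun _ _ h => ⟨h.1.symm, h.2.symm⟩)
    (fun s h => h.1 rfl)

/-- Adjacency relation determined by a list of edges. -/
def listAdj {n : ℕ} (L : List (Fin n × Fin n)) (i j : Fin n) : Prop :=
  (i, j) ∈ L ∨ (j, i) ∈ L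

instance {n : ℕ} (L : List (Fin n × Fin n)) (i j : Fin n) : Decidable (listAdj L i j) := by
  unfold listAdj; infer_instance

/-- The Coxeter graph `E₆`. -/
noncomputable def E6mat : CoxeterMat (Fin 6) :=
  ofAdj (listAdj [(0,2),(2,3),(3,4),(4,5),(1,3)])
    (fun _ _ h => h.symm) (by decide)

/-- The Coxeter graph `E₇`. -/
noncomputable def E7mat : CoxeterMat (Fin 7) :=
  ofAdj (listAdj [(0,2),(2,3),(3,4),(4,5),(5,6),(1,3)])
    (fun _ _ h => h.symm) (by decide)

/-- The Coxeter graph `E₈`. -/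
noncomputable def E8mat : CoxeterMat (Fin 8) :=
  ofAdj (listAdj [(0,2),(2,3),(3,4),(4,5),(5,6),(6,7),(1,3)])
    (fun _ _ h => h.symm) (by decide)

/-- The Coxeter graph `A_∞`: the one-sided infinite path. -/
noncomputable def Ainf : CoxeterMat ℕ :=
  ofAdj (fun i j => i + 1 = j ∨ j + 1 = i)
    (fun _ _ h => h.symm)
    (fun s h => by omega)

/-- The Coxeter graph `_∞A_∞`: the two-sided infinite path. -/
noncomputable def ZAinf : CoxeterMat ℤ :=
  ofAdj (fun i j => i + 1 = j ∨ j + 1 = i)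
    (fun _ _ h => h.symm)
    (fun s h => by omega)

/-- The Coxeter graph `D_∞`: vertices `0, 1, 2, 3, …` with `0` and `1` joined to `2` and a
path `2 — 3 — 4 — ⋯`. -/
noncomputable def Dinf : CoxeterMat ℕ :=
  ofAdj (fun i j => i ≠ j ∧
      (((i = 0 ∧ j = 2) ∨ (i = 1 ∧ j = 2) ∨ (i + 1 = j ∧ 2 ≤ i)) ∨
       ((j = 0 ∧ i = 2) ∨ (j = 1 ∧ i = 2) ∨ (j + 1 = i ∧ 2 ≤ j))))
    (fun _ _ h => ⟨h.1.symm, h.2.symm⟩)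
    (fun s h => h.1 rfl)

/-- The affine Coxeter graph `Ã_n`: a cycle with `n + 1` vertices. -/
noncomputable def affA (n : ℕ) : CoxeterMat (ZMod (n + 1)) :=
  ofAdj (fun i j => i ≠ j ∧ (i + 1 = j ∨ j + 1 = i))
    (fun _ _ h => ⟨h.1.symm, h.2.symm⟩)
    (fun s h => h.1 rfl)

/-- The affine Coxeter graph `D̃_n` (on `n + 1` vertices, Bourbaki numbering): `0` and `1`
joined to `2`, a path `2 — 3 — ⋯ — (n-1)`, and `n` joined to `n-2`. -/
noncomputable def affD (n : ℕ) : CoxeterMat (Fin (n + 1)) :=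
  ofAdj (fun i j => i ≠ j ∧
      (((i.val = 0 ∧ j.val = 2) ∨ (i.val = 1 ∧ j.val = 2) ∨
        (i.val + 1 = j.val ∧ 2 ≤ i.val ∧ i.val ≤ n - 2) ∨
        (i.val = n - 2 ∧ j.val = n)) ∨
       ((j.val = 0 ∧ i.val = 2) ∨ (j.val = 1 ∧ i.val = 2) ∨
        (j.val + 1 = i.val ∧ 2 ≤ j.val ∧ j.val ≤ n - 2) ∨
        (j.val = n - 2 ∧ i.val = n))))
    (fun _ _ h => ⟨h.1.symm, h.2.symm⟩)
    (fun s h => h.1 rfl)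

/-- The affine Coxeter graph `Ẽ₆` (Bourbaki numbering, affine vertex `0`). -/
noncomputable def affE6 : CoxeterMat (Fin 7) :=
  ofAdj (listAdj [(1,3),(3,4),(4,5),(5,6),(2,4),(0,2)])
    (fun _ _ h => h.symm) (by decide)

/-- The affine Coxeter graph `Ẽ₇` (Bourbaki numbering, affine vertex `0`). -/
noncomputable def affE7 : CoxeterMat (Fin 8) :=
  ofAdj (listAdj [(0,1),(1,3),(3,4),(4,5),(5,6),(6,7),(2,4)])
    (fun _ _ h => h.symm) (by decide)

/-- The affine Coxeter graph `Ẽ₈` (Bourbaki numbering, affine vertex `0`). -/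
noncomputable def affE8 : CoxeterMat (Fin 9) :=
  ofAdj (listAdj [(1,3),(3,4),(4,5),(5,6),(6,7),(7,8),(2,4),(0,8)])
    (fun _ _ h => h.symm) (by decide)


namespace D4aux
open CoxeterMat Finsupp

noncomputable def v (a b c d : ℝ) : Fin 4 →₀ ℝ :=
  a • sroot (0 : Fin 4) + b • sroot 1 + c • sroot 2 + d • sroot 3

lemma sroot0 : sroot (0 : Fin 4) = v 1 0 0 0 := by simp [v]
lemma sroot1 : sroot (1 : Fin 4) = v 0 1 0 0 := by simp [v]
lemma sroot2 : sroot (2 : Fin 4) = v 0 0 1 0 := by simp [v]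
lemma sroot3 : sroot (3 : Fin 4) = v 0 0 0 1 := by simp [v]

lemma sroot0' : sroot (⟨0, by omega⟩ : Fin 4) = v 1 0 0 0 := sroot0
lemma sroot1' : sroot (⟨1, by omega⟩ : Fin 4) = v 0 1 0 0 := sroot1
lemma sroot2' : sroot (⟨2, by omega⟩ : Fin 4) = v 0 0 1 0 := sroot2
lemma sroot3' : sroot (⟨3, by omega⟩ : Fin 4) = v 0 0 0 1 := sroot3

lemma bform_sroot {S : Type*} (M : CoxeterMat S) (s t : S) :
    M.bform (sroot s) (sroot t) = M.c s t := by
  simp [CoxeterMat.bform, sroot, Finsupp.lift_apply, Finsupp.sum_single_index]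

lemma c_self {S : Type*} (M : CoxeterMat S) (s : S) : M.c s s = 2 := by
  simp only [CoxeterMat.c, M.diagonal]
  norm_num [Real.cos_pi]

lemma c01 : (Dmat 4).c 0 1 = -1 := by
  have h : (Dmat 4).m 0 1 = 3 := by
    simp only [Dmat, ofAdj]
    rw [if_neg (by decide), if_pos (by decide)]
  simp only [CoxeterMat.c, h]
  norm_num [Real.cos_pi_div_three]

lemma c02 : (Dmat 4).c 0 2 = 0 := by
  have h : (Dmat 4).m 0 2 = 2 := by
    simp only [Dmat, ofAdj]
    rw [if_neg (by decide), if_neg (by decide)]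
  simp only [CoxeterMat.c, h]
  norm_num [Real.cos_pi_div_two]

lemma c03 : (Dmat 4).c 0 3 = 0 := by
  have h : (Dmat 4).m 0 3 = 2 := by
    simp only [Dmat, ofAdj]
    rw [if_neg (by decide), if_neg (by decide)]
  simp only [CoxeterMat.c, h]
  norm_num [Real.cos_pi_div_two]

lemma c10 : (Dmat 4).c 1 0 = -1 := by
  have h : (Dmat 4).m 1 0 = 3 := by
    simp only [Dmat, ofAdj]
    rw [if_neg (by decide), if_pos (by decide)]
  simp only [CoxeterMat.c, h]
  norm_num [Real.cos_pi_div_three]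

lemma c12 : (Dmat 4).c 1 2 = -1 := by
  have h : (Dmat 4).m 1 2 = 3 := by
    simp only [Dmat, ofAdj]
    rw [if_neg (by decide), if_pos (by decide)]
  simp only [CoxeterMat.c, h]
  norm_num [Real.cos_pi_div_three]

lemma c13 : (Dmat 4).c 1 3 = -1 := by
  have h : (Dmat 4).m 1 3 = 3 := by
    simp only [Dmat, ofAdj]
    rw [if_neg (by decide), if_pos (by decide)]
  simp only [CoxeterMat.c, h]
  norm_num [Real.cos_pi_div_three]

lemma c20 : (Dmat 4).c 2 0 = 0 := by
  have h : (Dmat 4).m 2 0 = 2 := by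
    simp only [Dmat, ofAdj]
    rw [if_neg (by decide), if_neg (by decide)]
  simp only [CoxeterMat.c, h]
  norm_num [Real.cos_pi_div_two]

lemma c21 : (Dmat 4).c 2 1 = -1 := by
  have h : (Dmat 4).m 2 1 = 3 := by
    simp only [Dmat, ofAdj]
    rw [if_neg (by decide), if_pos (by decide)]
  simp only [CoxeterMat.c, h]
  norm_num [Real.cos_pi_div_three]

lemma c23 : (Dmat 4).c 2 3 = 0 := by
  have h : (Dmat 4).m 2 3 = 2 := by
    simp only [Dmat, ofAdj]
    rw [if_neg (by decide), if_neg (by decide)]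
  simp only [CoxeterMat.c, h]
  norm_num [Real.cos_pi_div_two]

lemma c30 : (Dmat 4).c 3 0 = 0 := by
  have h : (Dmat 4).m 3 0 = 2 := by
    simp only [Dmat, ofAdj]
    rw [if_neg (by decide), if_neg (by decide)]
  simp only [CoxeterMat.c, h]
  norm_num [Real.cos_pi_div_two]

lemma c31 : (Dmat 4).c 3 1 = -1 := by
  have h : (Dmat 4).m 3 1 = 3 := by
    simp only [Dmat, ofAdj]
    rw [if_neg (by decide), if_pos (by decide)]
  simp only [CoxeterMat.c, h]
  norm_num [Real.cos_pi_div_three]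

lemma c32 : (Dmat 4).c 3 2 = 0 := by
  have h : (Dmat 4).m 3 2 = 2 := by
    simp only [Dmat, ofAdj]
    rw [if_neg (by decide), if_neg (by decide)]
  simp only [CoxeterMat.c, h]
  norm_num [Real.cos_pi_div_two]


lemma sigma_apply {S : Type*} (M : CoxeterMat S) (s : S) (x : S →₀ ℝ) :
    M.sigma s x = x - (M.bform (sroot s) x) • sroot s := rfl

lemma sigma_invol {S : Type*} (M : CoxeterMat S) (s : S) (x : S →₀ ℝ) :
    M.sigma s (M.sigma s x) = x := by
  simp only [sigma_apply, map_sub, map_smul, bform_sroot, c_self, smul_eq_mul]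
  module

lemma bform_v (s : Fin 4) (a b c d : ℝ) :
    (Dmat 4).bform (sroot s) (v a b c d) =
      a * (Dmat 4).c s 0 + b * (Dmat 4).c s 1 + c * (Dmat 4).c s 2 + d * (Dmat 4).c s 3 := by
  simp only [v, map_add, map_smul, bform_sroot, smul_eq_mul]

lemma sig0 (a b c d : ℝ) : (Dmat 4).sigma 0 (v a b c d) = v (b - a) b c d := by
  rw [sigma_apply, bform_v, c_self, c01, c02, c03]
  simp only [v]; module

lemma sig1 (a b c d : ℝ) : (Dmat 4).sigma 1 (v a b c d) = v a (a - b + c + d) c d := by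
  rw [sigma_apply, bform_v, c_self, c10, c12, c13]
  simp only [v]; module

lemma sig2 (a b c d : ℝ) : (Dmat 4).sigma 2 (v a b c d) = v a b (b - c) d := by
  rw [sigma_apply, bform_v, c_self, c20, c21, c23]
  simp only [v]; module

lemma sig3 (a b c d : ℝ) : (Dmat 4).sigma 3 (v a b c d) = v a b c (b - d) := by
  rw [sigma_apply, bform_v, c_self, c30, c31, c32]
  simp only [v]; module

noncomputable def sigE (s : Fin 4) : (Fin 4 →₀ ℝ) ≃ₗ[ℝ] (Fin 4 →₀ ℝ) :=
  LinearEquiv.ofLinear ((Dmat 4).sigma s) ((Dmat 4).sigma s)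
    (LinearMap.ext fun x => sigma_invol (Dmat 4) s x)
    (LinearMap.ext fun x => sigma_invol (Dmat 4) s x)

lemma sigE_apply (s : Fin 4) (x : Fin 4 →₀ ℝ) : sigE s x = (Dmat 4).sigma s x := rfl

lemma sigE_mem (s : Fin 4) : sigE s ∈ (Dmat 4).Wgrp :=
  Subgroup.subset_closure ⟨s, rfl⟩


lemma mulE (e₁ e₂ : (Fin 4 →₀ ℝ) ≃ₗ[ℝ] (Fin 4 →₀ ℝ)) (x : Fin 4 →₀ ℝ) :
    (e₁ * e₂) x = e₁ (e₂ x) := rfl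

lemma oneE (x : Fin 4 →₀ ℝ) : (1 : (Fin 4 →₀ ℝ) ≃ₗ[ℝ] (Fin 4 →₀ ℝ)) x = x := rfl

noncomputable def Ue : (Fin 4 →₀ ℝ) ≃ₗ[ℝ] (Fin 4 →₀ ℝ) := sigE 0 * sigE 2 * sigE 3
noncomputable def Se : (Fin 4 →₀ ℝ) ≃ₗ[ℝ] (Fin 4 →₀ ℝ) := sigE 1

lemma Ue_v (a b c d : ℝ) : Ue (v a b c d) = v (b - a) b (b - c) (b - d) := by
  simp only [Ue, mulE, sigE_apply, sig3, sig2, sig0]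

lemma Se_v (a b c d : ℝ) : Se (v a b c d) = v a (a - b + c + d) c d := by
  simp only [Se, sigE_apply, sig1]

lemma Ue_mem : Ue ∈ (Dmat 4).Wgrp :=
  mul_mem (mul_mem (sigE_mem 0) (sigE_mem 2)) (sigE_mem 3)

lemma Se_mem : Se ∈ (Dmat 4).Wgrp := sigE_mem 1

def gp : Equiv.Perm (Fin 4) := (Equiv.swap (2 : Fin 4) 3).trans (Equiv.swap 0 2)

lemma permV_single (p : Equiv.Perm (Fin 4)) (t : Fin 4) (r : ℝ) :
    CoxeterMat.permV p (Finsupp.single t r) = Finsupp.single (p t) r :=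
  Finsupp.domLCongr_single p t r

lemma permV_mul (p q : Equiv.Perm (Fin 4)) :
    CoxeterMat.permV (S := Fin 4) (p * q) =
      (CoxeterMat.permV p * CoxeterMat.permV q : (Fin 4 →₀ ℝ) ≃ₗ[ℝ] (Fin 4 →₀ ℝ)) := by
  apply LinearEquiv.toLinearMap_injective
  apply Finsupp.lhom_ext
  intro a b
  simp [mulE, permV_single, Equiv.Perm.mul_apply]

lemma permV_one :
    CoxeterMat.permV (S := Fin 4) (1 : Equiv.Perm (Fin 4)) =
      (1 : (Fin 4 →₀ ℝ) ≃ₗ[ℝ] (Fin 4 →₀ ℝ)) := by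
  apply LinearEquiv.toLinearMap_injective
  apply Finsupp.lhom_ext
  intro a b
  simp [permV_single]

lemma permV_v (a b c d : ℝ) : CoxeterMat.permV gp (v a b c d) = v d b a c := by
  have h0 : gp 0 = 2 := by decide
  have h1 : gp 1 = 1 := by decide
  have h2 : gp 2 = 3 := by decide
  have h3 : gp 3 = 0 := by decide
  simp only [v, map_add, map_smul, sroot, permV_single, h0, h1, h2, h3]
  abel

lemma comm_U : CoxeterMat.permV gp * Ue = Ue * CoxeterMat.permV gp := by
  apply LinearEquiv.toLinearMap_injective
  apply Finsupp.lhom_ext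
  intro a b
  have hb : (Finsupp.single a b : Fin 4 →₀ ℝ) = b • sroot a := by
    simp [sroot, Finsupp.smul_single]
  fin_cases a <;>
    simp only [LinearEquiv.coe_coe, mulE, hb, map_smul,
      sroot0, sroot1, sroot2, sroot3, sroot0', sroot1', sroot2', sroot3', Ue_v, permV_v] <;> norm_num

lemma comm_S : CoxeterMat.permV gp * Se = Se * CoxeterMat.permV gp := by
  apply LinearEquiv.toLinearMap_injective
  apply Finsupp.lhom_ext
  intro a b
  have hb : (Finsupp.single a b : Fin 4 →₀ ℝ) = b • sroot a := by
    simp [sroot, Finsupp.smul_single]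
  fin_cases a <;>
    simp only [LinearEquiv.coe_coe, mulE, hb, map_smul,
      sroot0, sroot1, sroot2, sroot3, sroot0', sroot1', sroot2', sroot3', Se_v, permV_v] <;> norm_num

lemma comm_all {w : (Fin 4 →₀ ℝ) ≃ₗ[ℝ] (Fin 4 →₀ ℝ)}
    (hw : CoxeterMat.permV gp * w = w * CoxeterMat.permV gp) :
    ∀ h ∈ Subgroup.closure {gp}, CoxeterMat.permV h * w = w * CoxeterMat.permV h := by
  intro h hh
  refine Subgroup.closure_induction
    (p := fun h _ => CoxeterMat.permV h * w = w * CoxeterMat.permV h) ?_ ?_ ?_ ?_ hh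
  · rintro x rfl
    exact hw
  · show CoxeterMat.permV (S := Fin 4) 1 * w = w * CoxeterMat.permV 1
    rw [permV_one, one_mul, mul_one]
  · intro x y _ _ hx hy
    show CoxeterMat.permV (x * y) * w = w * CoxeterMat.permV (x * y)
    rw [permV_mul]
    exact Commute.mul_left hx hy
  · intro x _ hx
    show CoxeterMat.permV x⁻¹ * w = w * CoxeterMat.permV x⁻¹
    have h1 : CoxeterMat.permV (S := Fin 4) x⁻¹ = (CoxeterMat.permV x)⁻¹ := by
      apply eq_inv_of_mul_eq_one_left
      rw [← permV_mul, inv_mul_cancel, permV_one]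
    rw [h1]
    exact Commute.inv_left hx

lemma Ue_fix : Ue ∈ (Dmat 4).WfixG (Subgroup.closure {gp}) :=
  ⟨Ue_mem, comm_all comm_U⟩

lemma Se_fix : Se ∈ (Dmat 4).WfixG (Subgroup.closure {gp}) :=
  ⟨Se_mem, comm_all comm_S⟩


lemma one_fix : (1 : (Fin 4 →₀ ℝ) ≃ₗ[ℝ] (Fin 4 →₀ ℝ)) ∈
    (Dmat 4).WfixG (Subgroup.closure {gp}) :=
  ⟨one_mem _, fun h _ => by rw [mul_one, one_mul]⟩

lemma fix_mul {w₁ w₂ : (Fin 4 →₀ ℝ) ≃ₗ[ℝ] (Fin 4 →₀ ℝ)}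
    (h₁ : w₁ ∈ (Dmat 4).WfixG (Subgroup.closure {gp}))
    (h₂ : w₂ ∈ (Dmat 4).WfixG (Subgroup.closure {gp})) :
    w₁ * w₂ ∈ (Dmat 4).WfixG (Subgroup.closure {gp}) :=
  ⟨mul_mem h₁.1 h₂.1, fun h hh => Commute.mul_right (h₁.2 h hh) (h₂.2 h hh)⟩

def R : Set (Fin 4 →₀ ℝ) :=
  {v (-1 : ℝ) (-2 : ℝ) (-1 : ℝ) (-1 : ℝ),
   v (-1 : ℝ) (-1 : ℝ) (-1 : ℝ) (-1 : ℝ),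
   v (-1 : ℝ) (-1 : ℝ) (-1 : ℝ) (0 : ℝ),
   v (-1 : ℝ) (-1 : ℝ) (0 : ℝ) (-1 : ℝ),
   v (-1 : ℝ) (-1 : ℝ) (0 : ℝ) (0 : ℝ),
   v (-1 : ℝ) (0 : ℝ) (0 : ℝ) (0 : ℝ),
   v (0 : ℝ) (-1 : ℝ) (-1 : ℝ) (-1 : ℝ),
   v (0 : ℝ) (-1 : ℝ) (-1 : ℝ) (0 : ℝ),
   v (0 : ℝ) (-1 : ℝ) (0 : ℝ) (-1 : ℝ),
   v (0 : ℝ) (-1 : ℝ) (0 : ℝ) (0 : ℝ),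
   v (0 : ℝ) (0 : ℝ) (-1 : ℝ) (0 : ℝ),
   v (0 : ℝ) (0 : ℝ) (0 : ℝ) (-1 : ℝ),
   v (0 : ℝ) (0 : ℝ) (0 : ℝ) (1 : ℝ),
   v (0 : ℝ) (0 : ℝ) (1 : ℝ) (0 : ℝ),
   v (0 : ℝ) (1 : ℝ) (0 : ℝ) (0 : ℝ),
   v (0 : ℝ) (1 : ℝ) (0 : ℝ) (1 : ℝ),
   v (0 : ℝ) (1 : ℝ) (1 : ℝ) (0 : ℝ),
   v (0 : ℝ) (1 : ℝ) (1 : ℝ) (1 : ℝ),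
   v (1 : ℝ) (0 : ℝ) (0 : ℝ) (0 : ℝ),
   v (1 : ℝ) (1 : ℝ) (0 : ℝ) (0 : ℝ),
   v (1 : ℝ) (1 : ℝ) (0 : ℝ) (1 : ℝ),
   v (1 : ℝ) (1 : ℝ) (1 : ℝ) (0 : ℝ),
   v (1 : ℝ) (1 : ℝ) (1 : ℝ) (1 : ℝ),
   v (1 : ℝ) (2 : ℝ) (1 : ℝ) (1 : ℝ)}

lemma Rsig0 : ∀ x ∈ R, (Dmat 4).sigma 0 x ∈ R := by
  intro x hx
  simp only [R, Set.mem_insert_iff, Set.mem_singleton_iff] at hx ⊢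
  rcases hx with rfl|rfl|rfl|rfl|rfl|rfl|rfl|rfl|rfl|rfl|rfl|rfl|rfl|rfl|rfl|rfl|rfl|rfl|rfl|rfl|rfl|rfl|rfl|rfl <;> norm_num [sig0]

lemma Rsig1 : ∀ x ∈ R, (Dmat 4).sigma 1 x ∈ R := by
  intro x hx
  simp only [R, Set.mem_insert_iff, Set.mem_singleton_iff] at hx ⊢
  rcases hx with rfl|rfl|rfl|rfl|rfl|rfl|rfl|rfl|rfl|rfl|rfl|rfl|rfl|rfl|rfl|rfl|rfl|rfl|rfl|rfl|rfl|rfl|rfl|rfl <;> norm_num [sig1]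

lemma Rsig2 : ∀ x ∈ R, (Dmat 4).sigma 2 x ∈ R := by
  intro x hx
  simp only [R, Set.mem_insert_iff, Set.mem_singleton_iff] at hx ⊢
  rcases hx with rfl|rfl|rfl|rfl|rfl|rfl|rfl|rfl|rfl|rfl|rfl|rfl|rfl|rfl|rfl|rfl|rfl|rfl|rfl|rfl|rfl|rfl|rfl|rfl <;> norm_num [sig2]

lemma Rsig3 : ∀ x ∈ R, (Dmat 4).sigma 3 x ∈ R := by
  intro x hx
  simp only [R, Set.mem_insert_iff, Set.mem_singleton_iff] at hx ⊢
  rcases hx with rfl|rfl|rfl|rfl|rfl|rfl|rfl|rfl|rfl|rfl|rfl|rfl|rfl|rfl|rfl|rfl|rfl|rfl|rfl|rfl|rfl|rfl|rfl|rfl <;> norm_num [sig3]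


lemma Wgrp_R {w : (Fin 4 →₀ ℝ) ≃ₗ[ℝ] (Fin 4 →₀ ℝ)} (hw : w ∈ (Dmat 4).Wgrp) :
    (∀ x ∈ R, w x ∈ R) ∧ (∀ x ∈ R, w⁻¹ x ∈ R) := by
  refine Subgroup.closure_induction
    (p := fun w _ => (∀ x ∈ R, w x ∈ R) ∧ (∀ x ∈ R, w⁻¹ x ∈ R)) ?_ ?_ ?_ ?_ hw
  · rintro w ⟨s, hs⟩
    have hsig : ∀ x ∈ R, (Dmat 4).sigma s x ∈ R := by
      fin_cases s
      exacts [Rsig0, Rsig1, Rsig2, Rsig3]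
    have hfwd : ∀ x, w x = (Dmat 4).sigma s x := fun x => by
      rw [← hs]; rfl
    have hinv : ∀ x, w⁻¹ x = (Dmat 4).sigma s x := fun x => by
      have h1 : w ((Dmat 4).sigma s x) = x := by rw [hfwd, sigma_invol]
      conv_lhs => rw [← h1]
      exact w.symm_apply_apply _
    exact ⟨fun x hx => by rw [hfwd]; exact hsig x hx,
      fun x hx => by rw [hinv]; exact hsig x hx⟩
  · exact ⟨fun x hx => hx, fun x hx => hx⟩
  · intro a b _ _ ha hb
    refine ⟨fun x hx => ?_, fun x hx => ?_⟩
    · rw [mulE]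
      exact ha.1 _ (hb.1 x hx)
    · rw [mul_inv_rev, mulE]
      exact hb.2 _ (ha.2 x hx)
  · intro a _ ha
    exact ⟨ha.2, by simpa using ha.1⟩

lemma phi_sub : (Dmat 4).Phi ⊆ R := by
  rintro x ⟨w, hw, s, rfl⟩
  apply (Wgrp_R hw).1
  fin_cases s <;>
    simp [sroot0, sroot1, sroot2, sroot3, sroot0', sroot1', sroot2', sroot3', R, Set.mem_insert_iff, Set.mem_singleton_iff]

noncomputable def Orb (i : Fin 4) : Set (Fin 4 →₀ ℝ) :=
  {x | ∃ w ∈ (Dmat 4).WfixG (Subgroup.closure {gp}), x = w (sroot i)}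

lemma cov0 : v (-1 : ℝ) (-2 : ℝ) (-1 : ℝ) (-1 : ℝ) ∈ Orb 1 :=
  ⟨(Se * (Ue * Se)), (fix_mul Se_fix (fix_mul Ue_fix Se_fix)), by
    rw [mulE, mulE, sroot1, Se_v, Ue_v, Se_v]
    norm_num⟩

lemma cov1 : v (-1 : ℝ) (-1 : ℝ) (-1 : ℝ) (-1 : ℝ) ∈ Orb 1 :=
  ⟨(Ue * Se), (fix_mul Ue_fix Se_fix), by
    rw [mulE, sroot1, Se_v, Ue_v]
    norm_num⟩

lemma cov2 : v (-1 : ℝ) (-1 : ℝ) (-1 : ℝ) (0 : ℝ) ∈ Orb 3 :=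
  ⟨(Ue * (Se * Ue)), (fix_mul Ue_fix (fix_mul Se_fix Ue_fix)), by
    rw [mulE, mulE, sroot3, Ue_v, Se_v, Ue_v]
    norm_num⟩

lemma cov3 : v (-1 : ℝ) (-1 : ℝ) (0 : ℝ) (-1 : ℝ) ∈ Orb 2 :=
  ⟨(Ue * (Se * Ue)), (fix_mul Ue_fix (fix_mul Se_fix Ue_fix)), by
    rw [mulE, mulE, sroot2, Ue_v, Se_v, Ue_v]
    norm_num⟩

lemma cov4 : v (-1 : ℝ) (-1 : ℝ) (0 : ℝ) (0 : ℝ) ∈ Orb 0 :=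
  ⟨(Se * Ue), (fix_mul Se_fix Ue_fix), by
    rw [mulE, sroot0, Ue_v, Se_v]
    norm_num⟩

lemma cov5 : v (-1 : ℝ) (0 : ℝ) (0 : ℝ) (0 : ℝ) ∈ Orb 0 :=
  ⟨Ue, Ue_fix, by
    rw [sroot0, Ue_v]
    norm_num⟩

lemma cov6 : v (0 : ℝ) (-1 : ℝ) (-1 : ℝ) (-1 : ℝ) ∈ Orb 0 :=
  ⟨(Ue * (Se * Ue)), (fix_mul Ue_fix (fix_mul Se_fix Ue_fix)), by
    rw [mulE, mulE, sroot0, Ue_v, Se_v, Ue_v]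
    norm_num⟩

lemma cov7 : v (0 : ℝ) (-1 : ℝ) (-1 : ℝ) (0 : ℝ) ∈ Orb 2 :=
  ⟨(Se * Ue), (fix_mul Se_fix Ue_fix), by
    rw [mulE, sroot2, Ue_v, Se_v]
    norm_num⟩

lemma cov8 : v (0 : ℝ) (-1 : ℝ) (0 : ℝ) (-1 : ℝ) ∈ Orb 3 :=
  ⟨(Se * Ue), (fix_mul Se_fix Ue_fix), by
    rw [mulE, sroot3, Ue_v, Se_v]
    norm_num⟩

lemma cov9 : v (0 : ℝ) (-1 : ℝ) (0 : ℝ) (0 : ℝ) ∈ Orb 1 :=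
  ⟨Se, Se_fix, by
    rw [sroot1, Se_v]
    norm_num⟩

lemma cov10 : v (0 : ℝ) (0 : ℝ) (-1 : ℝ) (0 : ℝ) ∈ Orb 2 :=
  ⟨Ue, Ue_fix, by
    rw [sroot2, Ue_v]
    norm_num⟩

lemma cov11 : v (0 : ℝ) (0 : ℝ) (0 : ℝ) (-1 : ℝ) ∈ Orb 3 :=
  ⟨Ue, Ue_fix, by
    rw [sroot3, Ue_v]
    norm_num⟩

lemma cov12 : v (0 : ℝ) (0 : ℝ) (0 : ℝ) (1 : ℝ) ∈ Orb 3 :=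
  ⟨(1 : (Fin 4 →₀ ℝ) ≃ₗ[ℝ] (Fin 4 →₀ ℝ)), one_fix, by
    rw [oneE, sroot3]⟩

lemma cov13 : v (0 : ℝ) (0 : ℝ) (1 : ℝ) (0 : ℝ) ∈ Orb 2 :=
  ⟨(1 : (Fin 4 →₀ ℝ) ≃ₗ[ℝ] (Fin 4 →₀ ℝ)), one_fix, by
    rw [oneE, sroot2]⟩

lemma cov14 : v (0 : ℝ) (1 : ℝ) (0 : ℝ) (0 : ℝ) ∈ Orb 1 :=
  ⟨(1 : (Fin 4 →₀ ℝ) ≃ₗ[ℝ] (Fin 4 →₀ ℝ)), one_fix, by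
    rw [oneE, sroot1]⟩

lemma cov15 : v (0 : ℝ) (1 : ℝ) (0 : ℝ) (1 : ℝ) ∈ Orb 3 :=
  ⟨Se, Se_fix, by
    rw [sroot3, Se_v]
    norm_num⟩

lemma cov16 : v (0 : ℝ) (1 : ℝ) (1 : ℝ) (0 : ℝ) ∈ Orb 2 :=
  ⟨Se, Se_fix, by
    rw [sroot2, Se_v]
    norm_num⟩

lemma cov17 : v (0 : ℝ) (1 : ℝ) (1 : ℝ) (1 : ℝ) ∈ Orb 0 :=
  ⟨(Ue * Se), (fix_mul Ue_fix Se_fix), by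
    rw [mulE, sroot0, Se_v, Ue_v]
    norm_num⟩

lemma cov18 : v (1 : ℝ) (0 : ℝ) (0 : ℝ) (0 : ℝ) ∈ Orb 0 :=
  ⟨(1 : (Fin 4 →₀ ℝ) ≃ₗ[ℝ] (Fin 4 →₀ ℝ)), one_fix, by
    rw [oneE, sroot0]⟩

lemma cov19 : v (1 : ℝ) (1 : ℝ) (0 : ℝ) (0 : ℝ) ∈ Orb 0 :=
  ⟨Se, Se_fix, by
    rw [sroot0, Se_v]
    norm_num⟩

lemma cov20 : v (1 : ℝ) (1 : ℝ) (0 : ℝ) (1 : ℝ) ∈ Orb 2 :=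
  ⟨(Ue * Se), (fix_mul Ue_fix Se_fix), by
    rw [mulE, sroot2, Se_v, Ue_v]
    norm_num⟩

lemma cov21 : v (1 : ℝ) (1 : ℝ) (1 : ℝ) (0 : ℝ) ∈ Orb 3 :=
  ⟨(Ue * Se), (fix_mul Ue_fix Se_fix), by
    rw [mulE, sroot3, Se_v, Ue_v]
    norm_num⟩

lemma cov22 : v (1 : ℝ) (1 : ℝ) (1 : ℝ) (1 : ℝ) ∈ Orb 1 :=
  ⟨Ue, Ue_fix, by
    rw [sroot1, Ue_v]
    norm_num⟩

lemma cov23 : v (1 : ℝ) (2 : ℝ) (1 : ℝ) (1 : ℝ) ∈ Orb 1 :=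
  ⟨(Se * Ue), (fix_mul Se_fix Ue_fix), by
    rw [mulE, sroot1, Ue_v, Se_v]
    norm_num⟩

lemma R_orb : R ⊆ ((Orb 0 ∪ Orb 1) ∪ Orb 2) ∪ Orb 3 := by
  intro x hx
  simp only [R, Set.mem_insert_iff, Set.mem_singleton_iff] at hx
  simp only [Set.mem_union]
  rcases hx with rfl|rfl|rfl|rfl|rfl|rfl|rfl|rfl|rfl|rfl|rfl|rfl|rfl|rfl|rfl|rfl|rfl|rfl|rfl|rfl|rfl|rfl|rfl|rfl
  · exact Or.inl (Or.inl (Or.inr cov0))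
  · exact Or.inl (Or.inl (Or.inr cov1))
  · exact Or.inr cov2
  · exact Or.inl (Or.inr cov3)
  · exact Or.inl (Or.inl (Or.inl cov4))
  · exact Or.inl (Or.inl (Or.inl cov5))
  · exact Or.inl (Or.inl (Or.inl cov6))
  · exact Or.inl (Or.inr cov7)
  · exact Or.inr cov8
  · exact Or.inl (Or.inl (Or.inr cov9))
  · exact Or.inl (Or.inr cov10)
  · exact Or.inr cov11
  · exact Or.inr cov12
  · exact Or.inl (Or.inr cov13)
  · exact Or.inl (Or.inl (Or.inr cov14))
  · exact Or.inr cov15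
  · exact Or.inl (Or.inr cov16)
  · exact Or.inl (Or.inl (Or.inl cov17))
  · exact Or.inl (Or.inl (Or.inl cov18))
  · exact Or.inl (Or.inl (Or.inl cov19))
  · exact Or.inl (Or.inr cov20)
  · exact Or.inr cov21
  · exact Or.inl (Or.inl (Or.inr cov22))
  · exact Or.inl (Or.inl (Or.inr cov23))

end D4aux


/-- For `W` of type `D₄` (vertices `0, 1, 2, 3` corresponding to `s₁, s₂, s₃, s₄`, the
central vertex being index `1`), and `G` generated by the 3-cycle `g` with
`g(s₁) = s₃, g(s₃) = s₄, g(s₄) = s₁, g(s₂) = s₂`, every root lies in a `W^G`-orbit of a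
simple root. -/
theorem stmt17 :
    (Dmat 4).Phi =
      {x | ∃ w ∈ (Dmat 4).WfixG
          (Subgroup.closure {(Equiv.swap (2 : Fin 4) 3).trans (Equiv.swap 0 2)}),
        x = w (sroot (0 : Fin 4))} ∪
      {x | ∃ w ∈ (Dmat 4).WfixG
          (Subgroup.closure {(Equiv.swap (2 : Fin 4) 3).trans (Equiv.swap 0 2)}),
        x = w (sroot (1 : Fin 4))} ∪
      {x | ∃ w ∈ (Dmat 4).WfixG
          (Subgroup.closure {(Equiv.swap (2 : Fin 4) 3).trans (Equiv.swap 0 2)}),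
        x = w (sroot (2 : Fin 4))} ∪
      {x | ∃ w ∈ (Dmat 4).WfixG
          (Subgroup.closure {(Equiv.swap (2 : Fin 4) 3).trans (Equiv.swap 0 2)}),
        x = w (sroot (3 : Fin 4))} := by
  have key : (Dmat 4).Phi = ((D4aux.Orb 0 ∪ D4aux.Orb 1) ∪ D4aux.Orb 2) ∪ D4aux.Orb 3 := by
    apply Set.Subset.antisymm
    · exact fun x hx => D4aux.R_orb (D4aux.phi_sub hx)
    · intro x hx
      simp only [Set.mem_union, D4aux.Orb, Set.mem_setOf_eq] at hx
      rcases hx with ((⟨w, hw, rfl⟩ | ⟨w, hw, rfl⟩) | ⟨w, hw, rfl⟩) | ⟨w, hw, rfl⟩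
      exacts [⟨w, hw.1, 0, rfl⟩, ⟨w, hw.1, 1, rfl⟩, ⟨w, hw.1, 2, rfl⟩, ⟨w, hw.1, 3, rfl⟩]
  exact key
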